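/- Let G be a finite simple graph with m edges, n vertices, average degree 2m/n ≥ 100·log₂ k and m ≥ 20·C(k,2), where k ≥ 2. Let 𝔸 be a uniformly random orientation of G (each edge independently oriented in either direction with probability 1/2). Then with positive probability, for every oriented graph D on at most k vertices, every set F of at most m/10 arcs of 𝔸, and every map g: V(G) → V(D), the map g does not send every arc of 𝔸 − F to an arc of D with matching orientation—provided ε = 1/10 and where the failure probability is bounded by 3^{C(k,2)} · 2^{H(1/10)·m} · k^n · 2^{−(9/10)m} < 1. -/

import Mathlib

open Finset

-- auxiliary lemmas
lemma agree_count {α : Type*} [Fintype α] [DecidableEq α] (T : Finset α) (c : α → Bool) :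
    (Finset.univ.filter (fun f : α → Bool => ∀ p ∈ T, f p = c p)).card
      ≤ 2 ^ (Fintype.card α - T.card) := by
  classical
  have := Finset.card_le_card_of_injOn
    (f := fun (f : α → Bool) => (fun x : {x // x ∈ Tᶜ} => f x.1))
    (s := Finset.univ.filter (fun f : α → Bool => ∀ p ∈ T, f p = c p))
    (t := (Finset.univ : Finset ({x // x ∈ Tᶜ} → Bool)))
    (fun f _ => Finset.mem_univ _)
    (by
      intro f hf g hg h
      simp only [Finset.mem_coe, Finset.mem_filter] at hf hg
      funext x
      by_cases hx : x ∈ T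
      · rw [hf.2 x hx, hg.2 x hx]
      · exact congrFun h ⟨x, by simpa using hx⟩)
  calc _ ≤ _ := this
    _ = 2 ^ (Fintype.card α - T.card) := by
        rw [Finset.card_univ, Fintype.card_fun]
        simp [Finset.card_compl]

lemma diag_card (k : ℕ) : Fintype.card {p : Fin k × Fin k // p.1 = p.2} = k := by
  have e : {p : Fin k × Fin k // p.1 = p.2} ≃ Fin k :=
    { toFun := fun p => p.1.1
      invFun := fun a => ⟨(a, a), rfl⟩
      left_inv := by rintro ⟨⟨a, b⟩, h⟩; cases h; rfl
      right_inv := fun a => rfl }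
  rw [Fintype.card_congr e, Fintype.card_fin]

lemma Dcount (k : ℕ) :
    (Finset.univ.filter
      (fun D : Fin k → Fin k → Bool => ∀ a b, D a b = true → D b a = false)).card
      ≤ 2 ^ (k * k - k) := by
  classical
  have key : ∀ D ∈ Finset.univ.filter
      (fun D : Fin k → Fin k → Bool => ∀ a b, D a b = true → D b a = false),
      ∀ a : Fin k, D a a = false := by
    intro D hD a
    simp only [Finset.mem_filter] at hD
    by_cases h : D a a = true
    · exact absurd (hD.2 a a h) (by simp [h])
    · simpa using h
  have := Finset.card_le_card_of_injOn
    (f := fun (D : Fin k → Fin k → Bool) =>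
      (fun p : {p : Fin k × Fin k // p.1 ≠ p.2} => D p.1.1 p.1.2))
    (s := Finset.univ.filter
      (fun D : Fin k → Fin k → Bool => ∀ a b, D a b = true → D b a = false))
    (t := (Finset.univ : Finset ({p : Fin k × Fin k // p.1 ≠ p.2} → Bool)))
    (fun D _ => Finset.mem_univ _)
    (by
      intro D hD E hE h
      funext a b
      by_cases hab : a = b
      · subst hab
        rw [key D hD a, key E hE a]
      · exact congrFun h ⟨(a, b), hab⟩)
  refine this.trans ?_
  rw [Finset.card_univ, Fintype.card_fun, Fintype.card_bool]
  have : Fintype.card {p : Fin k × Fin k // p.1 ≠ p.2} = k * k - k := by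
    have := Fintype.card_subtype_compl (fun p : Fin k × Fin k => p.1 = p.2)
    rw [_root_.diag_card] at this
    simpa using this
  rw [this]

lemma pow_filter_card {α : Type*} [DecidableEq α] (s : Finset α) (t : ℕ) :
    (s.powerset.filter (fun S => S.card ≤ t)).card
      ≤ ∑ i ∈ Finset.range (t + 1), s.card.choose i := by
  classical
  have hsub : s.powerset.filter (fun S => S.card ≤ t)
      ⊆ (Finset.range (t + 1)).biUnion (fun i => Finset.powersetCard i s) := by
    intro S hS
    simp only [Finset.mem_filter, Finset.mem_powerset] at hS
    exact Finset.mem_biUnion.2 ⟨S.card, Finset.mem_range.2 (Nat.lt_succ_of_le hS.2),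
      Finset.mem_powersetCard.2 ⟨hS.1, rfl⟩⟩
  calc _ ≤ _ := Finset.card_le_card hsub
    _ ≤ ∑ i ∈ Finset.range (t + 1), (Finset.powersetCard i s).card :=
        Finset.card_biUnion_le
    _ = _ := by simp [Finset.card_powersetCard]

lemma binom_bound (m t : ℕ) (ht : t ≤ m) :
    (∑ i ∈ Finset.range (t + 1), m.choose i) * 4 ^ m ≤ 4 ^ t * 5 ^ m := by
  calc (∑ i ∈ Finset.range (t + 1), m.choose i) * 4 ^ m
      = ∑ i ∈ Finset.range (t + 1), m.choose i * 4 ^ m := by rw [Finset.sum_mul]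
    _ ≤ ∑ i ∈ Finset.range (t + 1), 4 ^ t * (1 ^ i * 4 ^ (m - i) * m.choose i) := by
        apply Finset.sum_le_sum
        intro i hi
        have hit : i ≤ t := Nat.lt_succ_iff.mp (Finset.mem_range.mp hi)
        have him : i ≤ m := hit.trans ht
        have : 4 ^ m = 4 ^ i * 4 ^ (m - i) := by
          rw [← pow_add, Nat.add_sub_cancel' him]
        rw [this, one_pow, one_mul]
        calc m.choose i * (4 ^ i * 4 ^ (m - i))
            = 4 ^ i * (4 ^ (m - i) * m.choose i) := by ring
          _ ≤ 4 ^ t * (4 ^ (m - i) * m.choose i) :=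
              Nat.mul_le_mul_right _ (Nat.pow_le_pow_right (by norm_num) hit)
    _ = 4 ^ t * ∑ i ∈ Finset.range (t + 1), 1 ^ i * 4 ^ (m - i) * m.choose i := by
        rw [Finset.mul_sum]
    _ ≤ 4 ^ t * ∑ i ∈ Finset.range (m + 1), 1 ^ i * 4 ^ (m - i) * m.choose i := by
        apply Nat.mul_le_mul_left
        apply Finset.sum_le_sum_of_subset
        exact Finset.range_subset_range.2 (Nat.succ_le_succ ht)
    _ = 4 ^ t * 5 ^ m := by
        have h5 : ((1:ℕ) + 4) ^ m = ∑ i ∈ Finset.range (m + 1), 1 ^ i * 4 ^ (m - i) * m.choose i := by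
          rw [add_pow]; simp
        norm_num at h5
        rw [h5]; simp

lemma final_real (k m n t : ℕ) (hk : 2 ≤ k) (hkk : 10 * (k * k - k) ≤ m)
    (ht : 10 * t ≤ m) (hm0 : 0 < m)
    (hlogk : (n : ℝ) * Real.logb 2 k ≤ (m : ℝ) / 50) :
    ((2 : ℝ) ^ (k * k - k) * (k : ℝ) ^ n * (4 ^ t * 5 ^ m) * 2 ^ t)
      < 2 ^ m * 4 ^ m := by
  have hM0 : (0 : ℝ) < m := by exact_mod_cast hm0
  have two_pos : (0 : ℝ) < 2 := by norm_num
  have f1 : (2 : ℝ) ^ (k * k - k) ≤ (2 : ℝ) ^ ((m:ℝ) / 10 : ℝ) := by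
    rw [← Real.rpow_natCast 2 (k * k - k)]
    apply Real.rpow_le_rpow_of_exponent_le one_le_two
    have : ((10 * (k * k - k) : ℕ) : ℝ) ≤ (m:ℝ) := by exact_mod_cast hkk
    push_cast at this
    linarith
  have f2 : (k : ℝ) ^ n ≤ (2 : ℝ) ^ ((m:ℝ) / 50 : ℝ) := by
    have hkpos : (0 : ℝ) < k := by positivity
    have hbase : (2 : ℝ) ^ (Real.logb 2 k) = k :=
      Real.rpow_logb two_pos (by norm_num) hkpos
    have : (k : ℝ) ^ n = (2 : ℝ) ^ (Real.logb 2 k * n : ℝ) := by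
      rw [Real.rpow_mul (by norm_num), hbase, Real.rpow_natCast]
    rw [this]
    apply Real.rpow_le_rpow_of_exponent_le one_le_two
    calc Real.logb 2 k * n = (n : ℝ) * Real.logb 2 k := by ring
      _ ≤ (m:ℝ) / 50 := hlogk
  have f3 : (4 : ℝ) ^ t ≤ (2 : ℝ) ^ ((m:ℝ) / 5 : ℝ) := by
    have : (4 : ℝ) ^ t = (2 : ℝ) ^ ((2 * t : ℕ) : ℝ) := by
      rw [Real.rpow_natCast, pow_mul]; norm_num
    rw [this]
    apply Real.rpow_le_rpow_of_exponent_le one_le_two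
    have : ((10 * t : ℕ) : ℝ) ≤ (m:ℝ) := by exact_mod_cast ht
    push_cast at this ⊢
    linarith
  have h5 : (5 : ℝ) ≤ (2 : ℝ) ^ ((7 : ℝ) / 3) := by
    have hpow : ((2 : ℝ) ^ ((7 : ℝ) / 3)) ^ (3 : ℕ) = (2 : ℝ) ^ (7 : ℕ) := by
      rw [← Real.rpow_natCast ((2:ℝ) ^ ((7:ℝ)/3)) 3, ← Real.rpow_mul (by norm_num)]
      norm_num
    have h53 : (5 : ℝ) ^ (3 : ℕ) ≤ ((2 : ℝ) ^ ((7 : ℝ) / 3)) ^ (3 : ℕ) := by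
      rw [hpow]; norm_num
    exact le_of_pow_le_pow_left₀ (by norm_num) (by positivity) h53
  have f4 : (5 : ℝ) ^ m ≤ (2 : ℝ) ^ ((7 / 3 : ℝ) * (m:ℝ)) := by
    calc (5 : ℝ) ^ m ≤ ((2 : ℝ) ^ ((7 : ℝ) / 3)) ^ m :=
          pow_le_pow_left₀ (by norm_num) h5 m
      _ = (2 : ℝ) ^ ((7 / 3 : ℝ) * (m:ℝ)) := by
          rw [← Real.rpow_natCast ((2:ℝ) ^ ((7:ℝ)/3)) m, ← Real.rpow_mul (by norm_num)]
  have f5 : (2 : ℝ) ^ t ≤ (2 : ℝ) ^ ((m:ℝ) / 10 : ℝ) := by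
    rw [← Real.rpow_natCast 2 t]
    apply Real.rpow_le_rpow_of_exponent_le one_le_two
    have : ((10 * t : ℕ) : ℝ) ≤ (m:ℝ) := by exact_mod_cast ht
    push_cast at this
    linarith
  have hprod : (2 : ℝ) ^ (k * k - k) * (k : ℝ) ^ n * (4 ^ t * 5 ^ m) * 2 ^ t
      ≤ (2 : ℝ) ^ ((m:ℝ) / 10 + (m:ℝ) / 50 + ((m:ℝ) / 5 + (7 / 3 : ℝ) * (m:ℝ)) + (m:ℝ) / 10 : ℝ) := by
    rw [Real.rpow_add two_pos, Real.rpow_add two_pos, Real.rpow_add two_pos,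
      Real.rpow_add two_pos]
    apply mul_le_mul _ f5 (by positivity) (by positivity)
    apply mul_le_mul _ _ (by positivity) (by positivity)
    · exact mul_le_mul f1 f2 (by positivity) (by positivity)
    · exact mul_le_mul f3 f4 (by positivity) (by positivity)
  have hrhs : (2 : ℝ) ^ m * 4 ^ m = (2 : ℝ) ^ ((3 : ℝ) * (m:ℝ)) := by
    have : (2 : ℝ) ^ m * 4 ^ m = (2 : ℝ) ^ ((3 * m : ℕ) : ℝ) := by
      rw [Real.rpow_natCast]
      rw [show (4 : ℝ) = 2 ^ 2 by norm_num, ← pow_mul, ← pow_add]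
      ring_nf
    rw [this]; push_cast; ring_nf
  calc (2 : ℝ) ^ (k * k - k) * (k : ℝ) ^ n * (4 ^ t * 5 ^ m) * 2 ^ t
      ≤ (2 : ℝ) ^ ((m:ℝ) / 10 + (m:ℝ) / 50 + ((m:ℝ) / 5 + (7 / 3 : ℝ) * (m:ℝ)) + (m:ℝ) / 10 : ℝ) := hprod
    _ < (2 : ℝ) ^ ((3 : ℝ) * (m:ℝ)) := by
        apply Real.rpow_lt_rpow_of_exponent_lt one_lt_two
        linarith
    _ = (2 : ℝ) ^ m * 4 ^ m := hrhs.symm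

def AfD {V : Type} (G : SimpleGraph V) [DecidableRel G.Adj] (σ : V → ℕ)
    (f : V × V → Bool) (u v : V) : Bool :=
  if G.Adj u v then (if σ u < σ v then f (u, v) else !(f (v, u))) else false

lemma AfD_adj {V : Type} (G : SimpleGraph V) [DecidableRel G.Adj] (σ : V → ℕ)
    (f : V × V → Bool) (u v : V) (h : AfD G σ f u v = true) : G.Adj u v := by
  by_contra hadj
  simp [AfD, hadj] at h

lemma AfD_flip {V : Type} (G : SimpleGraph V) [DecidableRel G.Adj] (σ : V → ℕ)
    (hσ : Function.Injective σ)
    (f : V × V → Bool) (u v : V) (h : G.Adj u v) : AfD G σ f u v = !(AfD G σ f v u) := by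
  have h' : G.Adj v u := h.symm
  have hne : σ u ≠ σ v := fun e => G.ne_of_adj h (hσ e)
  rcases lt_or_gt_of_ne hne with hlt | hgt
  · simp [AfD, h, h', hlt, not_lt.2 hlt.le, asymm hlt]
  · simp [AfD, h, h', hgt, asymm hgt]

lemma EF_card {V : Type} [Fintype V] [DecidableEq V] (G : SimpleGraph V)
    [DecidableRel G.Adj] (σ : V → ℕ) (hσ : Function.Injective σ) :
    (Finset.univ.filter (fun p : V × V => G.Adj p.1 p.2 ∧ σ p.1 < σ p.2)).card
      = G.edgeFinset.card := by
  classical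
  refine Finset.card_bij (fun (p : V × V) _ => Sym2.mk p.1 p.2) ?_ ?_ ?_
  · rintro ⟨u, v⟩ hp
    simp only [Finset.mem_filter] at hp
    simpa [SimpleGraph.mem_edgeFinset] using hp.2.1
  · rintro ⟨u, v⟩ hp ⟨a, b⟩ hq h
    simp only [Finset.mem_filter] at hp hq
    replace h := (Sym2.mk_eq_mk_iff (p := (u, v)) (q := (a, b))).1 h
    rcases h with h | h
    · exact h
    · simp only [Prod.swap_prod_mk, Prod.mk.injEq] at h
      exfalso
      exact absurd (h.1 ▸ h.2 ▸ hq.2.2) (asymm hp.2.2)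
  · intro e he
    induction e using Sym2.ind with
    | _ u v =>
      rw [SimpleGraph.mem_edgeFinset, SimpleGraph.mem_edgeSet] at he
      have hne : σ u ≠ σ v := fun h => G.ne_of_adj he (hσ h)
      rcases lt_or_gt_of_ne hne with hlt | hgt
      · exact ⟨(u, v), by simp [he, hlt], rfl⟩
      · exact ⟨(v, u), by simp [he.symm, hgt], Sym2.eq_swap⟩

/-- For a graph `G` with `m ≥ 20·C(k,2)` edges and average degree
`2m/n ≥ 100·log₂ k`, provided the union-bound quantity
`3^{C(k,2)} · 2^{H(1/10)·m} · k^n · 2^{−(9/10)m}` is less than `1`, there exists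
an orientation `A` of `G` such that for every oriented graph `D` on at most `k`
vertices, every set `F` of at most `m/10` arcs, and every map `g`, the map `g`
does not send every arc of `A − F` to an arc of `D` with matching
orientation. -/
theorem stmt_15 {V : Type} [Fintype V] [DecidableEq V]
    (G : SimpleGraph V) [DecidableRel G.Adj] (k : ℕ) (hk : 2 ≤ k)
    (m n : ℕ) (hm : m = G.edgeFinset.card) (hn : n = Fintype.card V)
    (hdeg : 100 * Real.logb 2 k ≤ (2 * m : ℝ) / n)
    (hm20 : 20 * k.choose 2 ≤ m)
    (hprob : (3 : ℝ) ^ (k.choose 2) *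
        (2 : ℝ) ^ (((1 / 10 : ℝ) * Real.logb 2 10 +
          (9 / 10 : ℝ) * Real.logb 2 (10 / 9)) * m) *
        (k : ℝ) ^ n * (2 : ℝ) ^ (-(9 / 10 : ℝ) * m) < 1) :
    ∃ A : V → V → Bool,
      (∀ u v, A u v = true → G.Adj u v) ∧
      (∀ u v, G.Adj u v → A u v = !A v u) ∧
      ∀ D : Fin k → Fin k → Bool, (∀ a b, D a b = true → D b a = false) →
        ∀ F : Finset (V × V), (F.card : ℝ) ≤ (m : ℝ) / 10 →
          ∀ g : V → Fin k,
            ¬ (∀ u v, A u v = true → (u, v) ∉ F → D (g u) (g v) = true) := by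
  classical
  by_contra hcon
  push_neg at hcon
  have hcon' : ∀ A : V → V → Bool,
      (∀ u v, A u v = true → G.Adj u v) →
      (∀ u v, G.Adj u v → A u v = !A v u) →
      ∃ D : Fin k → Fin k → Bool, (∀ a b, D a b = true → D b a = false) ∧
        ∃ F : Finset (V × V), (F.card : ℝ) ≤ (m : ℝ) / 10 ∧
          ∃ g : V → Fin k, ∀ u v, A u v = true → (u, v) ∉ F →
            D (g u) (g v) = true := hcon
  set σ : V → ℕ := fun v => ((Fintype.equivFin V) v : ℕ) with hσdef
  have hσ : Function.Injective σ := fun a b h =>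
    (Fintype.equivFin V).injective (Fin.val_injective h)
  have hbad := fun f : V × V → Bool =>
    hcon' (AfD G σ f) (AfD_adj G σ f) (AfD_flip G σ hσ f)
  choose Dw hDw Fw hFw gw hgw using hbad
  set t := m / 10 with htdef
  set EF : Finset (V × V) :=
    Finset.univ.filter (fun p : V × V => G.Adj p.1 p.2 ∧ σ p.1 < σ p.2) with hEFdef
  have hEFm : EF.card = m := (EF_card G σ hσ).trans hm.symm
  set viol : (V × V → Bool) → Finset (V × V) := fun f =>
    EF.filter (fun p => ¬ (if f p then Dw f (gw f p.1) (gw f p.2) = true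
      else Dw f (gw f p.2) (gw f p.1) = true)) with hvioldef
  -- Claim C : the violation set is small
  have hviolcard : ∀ f, (viol f).card ≤ t := by
    intro f
    have hinj : (viol f).card ≤ (Fw f).card := by
      apply Finset.card_le_card_of_injOn (fun p => if f p then p else (p.2, p.1))
      · rintro ⟨u, v⟩ hp
        simp only [Finset.mem_coe, hvioldef, hEFdef, Finset.mem_filter, Finset.mem_univ, true_and] at hp
        obtain ⟨⟨hadj, hord⟩, hnok⟩ := hp
        by_cases hfp : f (u, v) = true
        · simp only [hfp, if_true] at hnok ⊢
          by_contra hF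
          exact hnok (hgw f u v (by simp [AfD, hadj, hord, hfp]) hF)
        · have hfp' : f (u, v) = false := by simpa using hfp
          simp only [hfp', if_false, Bool.false_eq_true] at hnok ⊢
          by_contra hF
          exact hnok (hgw f v u (by simp [AfD, hadj.symm, asymm hord, hfp']) hF)
      · rintro ⟨u, v⟩ hp ⟨a, b⟩ hq h
        simp only [hvioldef, hEFdef, Finset.coe_filter, Set.mem_setOf_eq,
          Finset.mem_filter, Finset.mem_univ, true_and] at hp hq
        obtain ⟨⟨hadj1, hord1⟩, -⟩ := hp
        obtain ⟨⟨hadj2, hord2⟩, -⟩ := hq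
        by_cases h1 : f (u, v) = true <;> by_cases h2 : f (a, b) = true <;>
          simp only [h1, h2, if_true, if_false, Bool.false_eq_true,
            Prod.mk.injEq] at h
        · exact Prod.ext h.1 h.2
        · exfalso; rw [h.1, h.2] at hord1; exact asymm hord1 hord2
        · exfalso; rw [← h.1, ← h.2] at hord2; exact asymm hord1 hord2
        · exact Prod.ext h.2 h.1
    have h10 : ((viol f).card : ℝ) ≤ (m : ℝ) / 10 :=
      le_trans (by exact_mod_cast hinj) (hFw f)
    rw [htdef, Nat.le_div_iff_mul_le (by norm_num)]
    exact_mod_cast (by push_cast; linarith : (((viol f).card * 10 : ℕ) : ℝ) ≤ (m : ℕ))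
  -- Claim D : off the violation set, f is determined
  have hdet : ∀ f p, p ∈ EF → p ∉ viol f → f p = Dw f (gw f p.1) (gw f p.2) := by
    intro f p hpEF hpv
    have hok : (if f p then Dw f (gw f p.1) (gw f p.2) = true
        else Dw f (gw f p.2) (gw f p.1) = true) := by
      by_contra h
      exact hpv (by rw [hvioldef]; exact Finset.mem_filter.2 ⟨hpEF, h⟩)
    by_cases hfp : f p = true
    · simp only [hfp, if_true] at hok
      rw [hfp, hok]
    · have hfp' : f p = false := by simpa using hfp
      simp only [hfp', if_false, Bool.false_eq_true] at hok
      rw [hfp', hDw f _ _ hok]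
  -- The counting
  set Dset := (Finset.univ.filter
    (fun D : Fin k → Fin k → Bool => ∀ a b, D a b = true → D b a = false)) with hDsetdef
  set B3 := EF.powerset.filter (fun S => S.card ≤ t) with hB3def
  set B := Dset ×ˢ ((Finset.univ : Finset (V → Fin k)) ×ˢ B3) with hBdef
  have hmem : ∀ f ∈ (Finset.univ : Finset (V × V → Bool)),
      (Dw f, gw f, viol f) ∈ B := by
    intro f _
    refine Finset.mem_product.2 ⟨?_, Finset.mem_product.2 ⟨Finset.mem_univ _, ?_⟩⟩
    · exact Finset.mem_filter.2 ⟨Finset.mem_univ _, hDw f⟩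
    · exact Finset.mem_filter.2
        ⟨Finset.mem_powerset.2 (by rw [hvioldef]; exact Finset.filter_subset _ _),
          hviolcard f⟩
  have hcount := Finset.card_eq_sum_card_fiberwise hmem
  set N := Fintype.card (V × V) with hNdef
  have hmN : m ≤ N := by
    rw [← hEFm, hNdef]
    exact (Finset.card_le_univ EF).trans_eq (Finset.card_univ)
  have hfib : ∀ b ∈ B,
      ((Finset.univ : Finset (V × V → Bool)).filter
        (fun f => (Dw f, gw f, viol f) = b)).card ≤ 2 ^ (N - (m - t)) := by
    rintro ⟨D, g, S⟩ hb
    have hb' := Finset.mem_product.1 hb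
    have hb3 := (Finset.mem_product.1 hb'.2).2
    have hSdef := Finset.mem_filter.1 hb3
    have hSsub : S ⊆ EF := Finset.mem_powerset.1 hSdef.1
    have hSt : S.card ≤ t := hSdef.2
    have hsub : (Finset.univ.filter
        (fun f : V × V → Bool => (Dw f, gw f, viol f) = (D, g, S)))
        ⊆ Finset.univ.filter
          (fun f : V × V → Bool => ∀ p ∈ EF \ S, f p = D (g p.1) (g p.2)) := by
      intro f hf
      simp only [Finset.mem_filter, Finset.mem_univ, true_and, Prod.mk.injEq] at hf ⊢
      obtain ⟨hD, hg, hS'⟩ := hf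
      intro p hp
      rw [Finset.mem_sdiff] at hp
      have := hdet f p hp.1 (by rw [hS']; exact hp.2)
      rw [this, hD, hg]
    calc _ ≤ _ := Finset.card_le_card hsub
      _ ≤ 2 ^ (Fintype.card (V × V) - (EF \ S).card) := agree_count _ _
      _ ≤ 2 ^ (N - (m - t)) := by
          apply Nat.pow_le_pow_right (by norm_num)
          rw [hNdef]
          apply Nat.sub_le_sub_left
          rw [Finset.card_sdiff_of_subset hSsub, hEFm]
          exact Nat.sub_le_sub_left hSt m
  have hcard2N : (2 : ℕ) ^ N ≤ B.card * 2 ^ (N - (m - t)) := by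
    have h1 : (Finset.univ : Finset (V × V → Bool)).card = 2 ^ N := by
      rw [Finset.card_univ, Fintype.card_fun, Fintype.card_bool, hNdef]
    calc (2 : ℕ) ^ N
        = ∑ b ∈ B, ((Finset.univ : Finset (V × V → Bool)).filter
            (fun f => (Dw f, gw f, viol f) = b)).card := by rw [← h1, hcount]
      _ ≤ ∑ _b ∈ B, 2 ^ (N - (m - t)) := Finset.sum_le_sum hfib
      _ = B.card * 2 ^ (N - (m - t)) := by rw [Finset.sum_const, smul_eq_mul]
  have hmt : m - t ≤ N := le_trans (Nat.sub_le m t) hmN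
  have hkey : 2 ^ (m - t) ≤ B.card := by
    have hpos : 0 < 2 ^ (N - (m - t)) := pow_pos (by norm_num) _
    apply Nat.le_of_mul_le_mul_right _ hpos
    calc 2 ^ (m - t) * 2 ^ (N - (m - t)) = 2 ^ N := by
          rw [← pow_add, Nat.add_sub_cancel' hmt]
      _ ≤ B.card * 2 ^ (N - (m - t)) := hcard2N
  have hBcard : B.card = Dset.card * ((k : ℕ) ^ n * B3.card) := by
    rw [hBdef, Finset.card_product, Finset.card_product, Finset.card_univ,
      Fintype.card_fun, Fintype.card_fin, hn]
  have htm : t ≤ m := Nat.div_le_self m 10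
  have hmaster : 2 ^ m ≤ Dset.card * (k ^ n * B3.card) * 2 ^ t := by
    calc 2 ^ m = 2 ^ (m - t) * 2 ^ t := by rw [← pow_add, Nat.sub_add_cancel htm]
      _ ≤ B.card * 2 ^ t := Nat.mul_le_mul_right _ hkey
      _ = _ := by rw [hBcard]
  have hD : Dset.card ≤ 2 ^ (k * k - k) := Dcount k
  have hB3 : B3.card ≤ ∑ i ∈ Finset.range (t + 1), m.choose i := by
    have := pow_filter_card EF t
    rw [hEFm] at this
    exact this
  have hfinalnat : 2 ^ m * 4 ^ m ≤ 2 ^ (k * k - k) * ((k : ℕ) ^ n * (4 ^ t * 5 ^ m)) * 2 ^ t := by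
    calc 2 ^ m * 4 ^ m
        ≤ (Dset.card * (k ^ n * B3.card) * 2 ^ t) * 4 ^ m :=
          Nat.mul_le_mul_right _ hmaster
      _ = Dset.card * (k ^ n * (B3.card * 4 ^ m)) * 2 ^ t := by ring
      _ ≤ 2 ^ (k * k - k) * ((k : ℕ) ^ n * (4 ^ t * 5 ^ m)) * 2 ^ t := by
          apply Nat.mul_le_mul _ le_rfl
          apply Nat.mul_le_mul hD
          apply Nat.mul_le_mul_left
          exact le_trans (Nat.mul_le_mul_right _ hB3) (binom_bound m t htm)
  -- numeric hypotheses for final_real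
  have hkkc : k * k - k = 2 * k.choose 2 := by
    rw [Nat.choose_two_right]
    have heven : 2 ∣ k * (k - 1) := by
      rcases Nat.even_or_odd k with he | ho
      · exact Dvd.dvd.mul_right he.two_dvd _
      · have : Even (k - 1) := Nat.Odd.sub_odd ho odd_one
        exact Dvd.dvd.mul_left this.two_dvd _
    rw [Nat.mul_div_cancel' heven]
    have : k * (k - 1) = k * k - k := by
      cases k with
      | zero => simp
      | succ j => rw [Nat.succ_sub_one]; ring_nf; omega
    omega
  have hkk10 : 10 * (k * k - k) ≤ m := by omega
  have ht10 : 10 * t ≤ m := by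
    have := Nat.div_mul_le_self m 10
    omega
  have hcpos : 0 < k.choose 2 := Nat.choose_pos hk
  have hm0 : 0 < m := by omega
  have hn0 : n ≠ 0 := by
    intro h0
    rw [h0] at hdeg
    simp only [Nat.cast_zero, div_zero] at hdeg
    have h1 : (1 : ℝ) ≤ Real.logb 2 k := by
      rw [Real.le_logb_iff_rpow_le one_lt_two (by positivity)]
      rw [Real.rpow_one]
      exact_mod_cast hk
    linarith
  have hnpos : (0 : ℝ) < n := by
    have : 0 < n := Nat.pos_of_ne_zero hn0
    exact_mod_cast this
  have hlogk : (n : ℝ) * Real.logb 2 k ≤ (m : ℝ) / 50 := by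
    have h2 := mul_le_mul_of_nonneg_right hdeg hnpos.le
    rw [div_mul_cancel₀ _ (ne_of_gt hnpos)] at h2
    nlinarith [h2]
  have hcontr := final_real k m n t hk hkk10 ht10 hm0 hlogk
  have hcast : ((2 : ℝ) ^ m * 4 ^ m)
      ≤ (2 : ℝ) ^ (k * k - k) * (k : ℝ) ^ n * (4 ^ t * 5 ^ m) * 2 ^ t := by
    have := hfinalnat
    have hc : ((2 ^ m * 4 ^ m : ℕ) : ℝ)
        ≤ ((2 ^ (k * k - k) * ((k : ℕ) ^ n * (4 ^ t * 5 ^ m)) * 2 ^ t : ℕ) : ℝ) := by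
      exact_mod_cast this
    push_cast at hc
    linarith [hc]
  exact absurd hcast (not_le.2 hcontr)
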